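/- Let (𝔥 → 𝔤, ▷̃) be a crossed module of Lie algebras with structure map t̃. On 𝔥 × 𝔤 define the semidirect-product bracket [(b₁,a₁),(b₂,a₂)] := ([b₁,b₂] + a₁ ▷̃ b₂ − a₂ ▷̃ b₁, [a₁,a₂]); this makes 𝔥 ⋊ 𝔤 a Lie algebra. Define t : 𝔥 → 𝔥 ⋊ 𝔤 by t(b) := (−b, t̃(b)); t : 𝔥 ⋊ 𝔤 → 𝔤 by t(b,a) := t̃(b) + a; 𝔤-actions a ▷ b := a ▷̃ b on 𝔥 and a₁ ▷ (b,a₂) := (a₁ ▷̃ b, [a₁,a₂]) on 𝔥 ⋊ 𝔤; and the Peiffer lifting {(b₁,a₁),(b₂,a₂)} := a₂ ▷̃ b₁. Then this data (𝔥 → 𝔥 ⋊ 𝔤 → 𝔤, ▷, {−,−}) satisfies all the axioms of a 2-crossed module of Lie algebras (the inner derivation 2-crossed module 𝔦𝔫𝔫(𝔥 → 𝔤)). -/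
import Mathlib


/-- For a crossed module of Lie algebras `(𝔥 → 𝔤, ▷̃)` with structure map `t̃`,
the data `𝔥 → 𝔥 ⋊ 𝔤 → 𝔤` with `t(b) = (−b, t̃(b))`, `t(b,a) = t̃(b) + a`, the evident
`𝔤`-actions and Peiffer lifting `{(b₁,a₁),(b₂,a₂)} = a₂ ▷̃ b₁` is a 2-crossed module of
Lie algebras — the inner derivation 2-crossed module `𝔦𝔫𝔫(𝔥 → 𝔤)`. -/
theorem inner_derivations_form_two_crossed_module
    {h : Type*} [LieRing h] [LieAlgebra ℝ h]
    {g : Type*} [LieRing g] [LieAlgebra ℝ g]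
    (t : h →ₗ⁅ℝ⁆ g) (act : g →ₗ[ℝ] h →ₗ[ℝ] h)
    (h_act : ∀ (a₁ a₂ : g) (b : h),
      act ⁅a₁, a₂⁆ b = act a₁ (act a₂ b) - act a₂ (act a₁ b))
    (h_der : ∀ (a : g) (b₁ b₂ : h),
      act a ⁅b₁, b₂⁆ = ⁅act a b₁, b₂⁆ + ⁅b₁, act a b₂⁆)
    (h_equiv : ∀ (a : g) (b : h), t (act a b) = ⁅a, t b⁆)
    (h_peiffer : ∀ b₁ b₂ : h, act (t b₁) b₂ = ⁅b₁, b₂⁆)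
    -- the semidirect-product bracket on 𝔥 ⋊ 𝔤 = 𝔥 × 𝔤
    (br : h × g → h × g → h × g)
    (h_br : ∀ p q : h × g,
      br p q = (⁅p.1, q.1⁆ + act p.2 q.1 - act q.2 p.1, ⁅p.2, q.2⁆))
    -- the structure maps of 𝔦𝔫𝔫(𝔥 → 𝔤)
    (tL : h → h × g) (h_tL : ∀ b : h, tL b = (-b, t b))
    (tM : h × g → g) (h_tM : ∀ p : h × g, tM p = t p.1 + p.2)
    (actM : g → h × g → h × g)
    (h_actM : ∀ (a : g) (p : h × g), actM a p = (act a p.1, ⁅a, p.2⁆))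
    (pf : h × g → h × g → h)
    (h_pf : ∀ p q : h × g, pf p q = act q.2 p.1) :
    -- the semidirect-product bracket makes 𝔥 ⋊ 𝔤 a Lie algebra
    (∀ p q : h × g, br p q = - br q p) ∧
    (∀ p q r : h × g, br p (br q r) + br q (br r p) + br r (br p q) = 0) ∧
    -- t : 𝔥 → 𝔥 ⋊ 𝔤 and t : 𝔥 ⋊ 𝔤 → 𝔤 are Lie algebra homomorphisms with t ∘ t = 0
    (∀ b₁ b₂ : h, tL ⁅b₁, b₂⁆ = br (tL b₁) (tL b₂)) ∧
    (∀ p q : h × g, tM (br p q) = ⁅tM p, tM q⁆) ∧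
    (∀ b : h, tM (tL b) = 0) ∧
    -- the 𝔤-action on 𝔥 ⋊ 𝔤 is a Lie algebra action by derivations
    (∀ (a₁ a₂ : g) (p : h × g),
      actM ⁅a₁, a₂⁆ p = actM a₁ (actM a₂ p) - actM a₂ (actM a₁ p)) ∧
    (∀ (a : g) (p q : h × g),
      actM a (br p q) = br (actM a p) q + br p (actM a q)) ∧
    -- equivariance of the structure maps
    (∀ (a : g) (b : h), tL (act a b) = actM a (tL b)) ∧
    (∀ (a : g) (p : h × g), tM (actM a p) = ⁅a, tM p⁆) ∧
    -- 𝔤-equivariance of the Peiffer lifting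
    (∀ (a : g) (p q : h × g),
      act a (pf p q) = pf (actM a p) q + pf p (actM a q)) ∧
    -- the five axioms of a 2-crossed module of Lie algebras
    (∀ p q : h × g, tL (pf p q) = br p q - actM (tM p) q) ∧
    (∀ c₁ c₂ : h, pf (tL c₁) (tL c₂) = ⁅c₁, c₂⁆) ∧
    (∀ p q r : h × g, pf p (br q r) = pf (tL (pf p q)) r - pf (tL (pf p r)) q) ∧
    (∀ p q r : h × g,
      pf (br p q) r = act (tM p) (pf q r) + pf p (br q r)
        - act (tM q) (pf p r) - pf q (br p r)) ∧
    (∀ (p : h × g) (c : h), - act (tM p) c = pf (tL c) p + pf p (tL c)) := by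

  refine ⟨?_, ?_, ?_, ?_, ?_, ?_, ?_, ?_, ?_, ?_, ?_, ?_, ?_, ?_, ?_⟩
  · intro p q
    simp only [h_br, Prod.ext_iff, Prod.fst_neg, Prod.snd_neg]
    constructor
    · rw [← lie_skew q.1 p.1]; abel
    · rw [← lie_skew]
  · intro p q r
    simp only [h_br, Prod.ext_iff, Prod.fst_add, Prod.snd_add, lie_add, add_lie,
      lie_sub, sub_lie, map_add, map_sub, h_der, h_act, Prod.fst_zero, Prod.snd_zero]
    have J : ⁅p.1, ⁅q.1, r.1⁆⁆ = -(⁅q.1, ⁅r.1, p.1⁆⁆ + ⁅r.1, ⁅p.1, q.1⁆⁆) := by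
      rw [eq_neg_iff_add_eq_zero, ← add_assoc]; exact lie_jacobi _ _ _
    constructor
    · rw [← lie_skew ((act p.2) q.1) r.1, ← lie_skew ((act q.2) r.1) p.1,
        ← lie_skew ((act r.2) p.1) q.1, J]
      abel
    · exact lie_jacobi _ _ _
  · intro b₁ b₂
    simp [h_br, h_tL, Prod.ext_iff, h_peiffer, h_equiv]
  · intro p q
    simp [h_br, h_tM, h_equiv, h_peiffer]
    rw [← lie_skew (t p.1) q.2]
    abel
  · intro b
    simp [h_tL, h_tM]
  · intro a₁ a₂ p
    simp [h_actM, h_act, Prod.ext_iff, h_equiv]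
  · intro a p q
    simp [h_actM, h_br, Prod.ext_iff, h_der, h_act]
    abel
  · intro a b
    simp [h_tL, h_actM, h_equiv]
  · intro a p
    simp [h_tM, h_actM, h_equiv]
  · intro a p q
    simp [h_pf, h_actM, h_act]
  · intro p q
    simp [h_tL, h_pf, h_br, h_actM, h_tM, Prod.ext_iff, h_equiv, h_peiffer]
  · intro c₁ c₂
    simp [h_pf, h_tL, h_peiffer]
  · intro p q r
    simp [h_pf, h_br, h_tL, h_act, h_peiffer, h_der]
    abel
  · intro p q r
    simp [h_pf, h_br, h_tM, h_act, h_peiffer, h_der]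
    rw [← lie_skew ((act r.2) p.1) q.1]
    abel
  · intro p c
    simp [h_pf, h_tL, h_tM, h_act, h_peiffer]
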